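/- A simultaneous strong metric dimension of a family of connected graphs on a common vertex set equals 1 if and only if every graph in the family is a path and all the paths share a common leaf. -/

import Mathlib

open SimpleGraph

variable {V : Type*}

/-- `w` strongly resolves `u` and `v` in `G`. -/
def StronglyResolves (G : SimpleGraph V) (w u v : V) : Prop :=
  G.dist u w = G.dist u v + G.dist v w ∨ G.dist v w = G.dist v u + G.dist u w

/-- `S` is a strong metric generator for `G`. -/
def IsStrongMetricGen (G : SimpleGraph V) (S : Set V) : Prop :=
  ∀ u v : V, u ≠ v → ∃ w ∈ S, StronglyResolves G w u v

/-- The simultaneous strong metric dimension of a family of graphs. -/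
noncomputable def SdS (𝒢 : Set (SimpleGraph V)) : ℕ :=
  sInf {n | ∃ S : Set V, S.ncard = n ∧ ∀ G ∈ 𝒢, IsStrongMetricGen G S}

/-- The strong metric dimension of a single graph. -/
noncomputable def sdim (G : SimpleGraph V) : ℕ := SdS {G}

/-- `u` is maximally distant from `v` in `G`. -/
def MaxDistantFrom (G : SimpleGraph V) (u v : V) : Prop :=
  ∀ w : V, G.Adj u w → G.dist v w ≤ G.dist v u

/-- `u` and `v` are mutually maximally distant in `G`. -/
def MutuallyMaxDistant (G : SimpleGraph V) (u v : V) : Prop :=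
  MaxDistantFrom G u v ∧ MaxDistantFrom G v u

/-- The strong resolving graph of `G`. -/
def SRG (G : SimpleGraph V) : SimpleGraph V where
  Adj u v := u ≠ v ∧ MutuallyMaxDistant G u v
  symm := by
    refine ⟨?_⟩
    intro u v h
    exact ⟨h.1.symm, h.2.2, h.2.1⟩
  loopless := by refine ⟨?_⟩; intro u h; exact h.1 rfl

/-- The boundary of `G`: vertices mutually maximally distant from some vertex. -/
def Boundary (G : SimpleGraph V) : Set V :=
  {u | ∃ v, MutuallyMaxDistant G u v}

/-- `S` is a vertex cover of `G`. -/
def IsVertexCover (G : SimpleGraph V) (S : Set V) : Prop :=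
  ∀ u v : V, G.Adj u v → u ∈ S ∨ v ∈ S

/-- The vertex cover number. -/
noncomputable def vcNum (G : SimpleGraph V) : ℕ :=
  sInf {n | ∃ S : Set V, S.ncard = n ∧ _root_.IsVertexCover G S}

/-- A strong resolving cover: simultaneously a vertex cover and a strong metric generator. -/
def IsStrongResCover (G : SimpleGraph V) (S : Set V) : Prop :=
  _root_.IsVertexCover G S ∧ IsStrongMetricGen G S

/-- The strong resolving cover number `β_s`. -/
noncomputable def betaS (G : SimpleGraph V) : ℕ :=
  sInf {n | ∃ S : Set V, S.ncard = n ∧ IsStrongResCover G S}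

/-- `G` is 2-antipodal. -/
def TwoAntipodal (G : SimpleGraph V) : Prop :=
  ∀ x : V, ∃! y : V, G.dist x y = G.diam

/-- `v` is a leaf of `G` (degree one). -/
def IsLeaf (G : SimpleGraph V) (v : V) : Prop := ∃! w : V, G.Adj v w
section Aux

lemma walk_length_lower {n : ℕ} {G : SimpleGraph V} (e : V ≃ Fin n)
    (hadj : ∀ u v, G.Adj u v → Nat.dist (e u).val (e v).val = 1) :
    ∀ {u v : V} (p : G.Walk u v), Nat.dist (e u).val (e v).val ≤ p.length := by
  intro u v p
  induction p with
  | nil => simp [Nat.dist_self]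
  | @cons a b c h q ih =>
    have h1 := hadj a b h
    have h2 := Nat.dist.triangle_inequality (e a).val (e b).val (e c).val
    simp only [SimpleGraph.Walk.length_cons]
    omega

lemma dist_le_of_step {n : ℕ} {G : SimpleGraph V} (hc : G.Connected) (e : V ≃ Fin n)
    (hadj : ∀ u v, Nat.dist (e u).val (e v).val = 1 → G.Adj u v) :
    ∀ (d : ℕ) (u v : V), (e v).val = (e u).val + d → G.dist u v ≤ d := by
  intro d
  induction d with
  | zero =>
    intro u v h
    have h1 : e u = e v := Fin.ext (by omega)
    have h2 : u = v := e.injective h1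
    simp [h2]
  | succ d ih =>
    intro u v h
    have hlt : (e u).val + 1 < n := by have := (e v).isLt; omega
    set x := e.symm ⟨(e u).val + 1, hlt⟩ with hx
    have hex : (e x).val = (e u).val + 1 := by simp [hx]
    have hadjux : G.Adj u x := hadj _ _ (by rw [hex]; unfold Nat.dist; omega)
    have h2 : G.dist x v ≤ d := ih x v (by omega)
    have h3 : G.dist u x = 1 := SimpleGraph.dist_eq_one_iff_adj.mpr hadjux
    have h4 : G.dist u v ≤ G.dist u x + G.dist x v := hc.dist_triangle
    omega

lemma dist_eq_linear {n : ℕ} {G : SimpleGraph V} (hc : G.Connected) (e : V ≃ Fin n)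
    (hadj : ∀ u v, G.Adj u v ↔ Nat.dist (e u).val (e v).val = 1) (u v : V) :
    G.dist u v = Nat.dist (e u).val (e v).val := by
  apply le_antisymm
  · rcases le_total (e u).val (e v).val with h | h
    · rw [Nat.dist_eq_sub_of_le h]
      exact dist_le_of_step hc e (fun u v h => (hadj u v).mpr h) _ u v (by omega)
    · rw [Nat.dist_eq_sub_of_le_right h, SimpleGraph.dist_comm]
      exact dist_le_of_step hc e (fun u v h => (hadj u v).mpr h) _ v u (by omega)
  · obtain ⟨p, hp⟩ := hc.exists_walk_length_eq_dist u v
    rw [← hp]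
    exact walk_length_lower e (fun u v h => (hadj u v).mp h) p

lemma leaf_pos {n : ℕ} {G : SimpleGraph V} (e : V ≃ Fin n)
    (hadj : ∀ u v, G.Adj u v ↔ Nat.dist (e u).val (e v).val = 1)
    {w : V} (hleaf : IsLeaf G w) : (e w).val = 0 ∨ (e w).val = n - 1 := by
  by_contra hk
  push_neg at hk
  obtain ⟨hk0, hk1⟩ := hk
  have hn := (e w).isLt
  set k := (e w).val with hkdef
  have h1 : k - 1 < n := by omega
  have h2 : k + 1 < n := by omega
  set x := e.symm ⟨k - 1, h1⟩ with hxd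
  set y := e.symm ⟨k + 1, h2⟩ with hyd
  have hex : (e x).val = k - 1 := by simp [hxd]
  have hey : (e y).val = k + 1 := by simp [hyd]
  have hax : G.Adj w x := (hadj w x).mpr (by rw [hex]; unfold Nat.dist; omega)
  have hay : G.Adj w y := (hadj w y).mpr (by rw [hey]; unfold Nat.dist; omega)
  obtain ⟨z, _, huniq⟩ := hleaf
  have hxy : x = y := (huniq x hax).trans (huniq y hay).symm
  have : (e x).val = (e y).val := by rw [hxy]
  omega

lemma gen_of_endpoint {n : ℕ} {G : SimpleGraph V} (hc : G.Connected) (e : V ≃ Fin n)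
    (hadj : ∀ u v, G.Adj u v ↔ Nat.dist (e u).val (e v).val = 1)
    {w : V} (hw : (e w).val = 0 ∨ (e w).val = n - 1) :
    ∀ u v : V, u ≠ v → StronglyResolves G w u v := by
  intro u v huv
  have h1 := dist_eq_linear hc e hadj u w
  have h2 := dist_eq_linear hc e hadj v w
  have h3 := dist_eq_linear hc e hadj u v
  have h4 := dist_eq_linear hc e hadj v u
  have hne : (e u).val ≠ (e v).val := fun h => huv (e.injective (Fin.ext h))
  have hu := (e u).isLt
  have hv := (e v).isLt
  unfold StronglyResolves
  rw [h1, h2, h3, h4]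
  unfold Nat.dist
  omega

lemma forward_core [Fintype V] {G : SimpleGraph V} {w : V} (hc : G.Connected)
    (hcard : 2 ≤ Fintype.card V)
    (hgen : ∀ u v : V, u ≠ v → StronglyResolves G w u v) :
    Nonempty (G ≃g pathGraph (Fintype.card V)) ∧ IsLeaf G w := by
  classical
  have hinj : ∀ u v : V, G.dist u w = G.dist v w → u = v := by
    intro u v h
    by_contra hne
    rcases hgen u v hne with h1 | h1
    · have h0 : G.dist u v = 0 := by omega
      exact hne (hc.dist_eq_zero_iff.mp h0)
    · have h0 : G.dist v u = 0 := by omega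
      exact hne (hc.dist_eq_zero_iff.mp h0).symm
  have hlt : ∀ v : V, G.dist v w < Fintype.card V := by
    intro v
    obtain ⟨p⟩ := hc.preconnected v w
    exact lt_of_le_of_lt (SimpleGraph.dist_le p.bypass) p.bypass_isPath.length_lt
  let g : V → Fin (Fintype.card V) := fun v => ⟨G.dist v w, hlt v⟩
  have hginj : Function.Injective g := by
    intro u v h
    exact hinj u v (by simpa [g, Fin.ext_iff] using h)
  have hgbij : Function.Bijective g :=
    (Fintype.bijective_iff_injective_and_card g).mpr ⟨hginj, (Fintype.card_fin _).symm⟩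
  let e : V ≃ Fin (Fintype.card V) := Equiv.ofBijective g hgbij
  have he : ∀ v, (e v).val = G.dist v w := fun v => rfl
  have hA : ∀ u v : V, G.Adj u v → Nat.dist (G.dist u w) (G.dist v w) = 1 := by
    intro u v h
    have h1 : G.dist u v = 1 := SimpleGraph.dist_eq_one_iff_adj.mpr h
    have t1 : G.dist u w ≤ G.dist u v + G.dist v w := hc.dist_triangle
    have t2 : G.dist v w ≤ G.dist v u + G.dist u w := hc.dist_triangle
    rw [SimpleGraph.dist_comm (u := v) (v := u)] at t2
    have hne : G.dist u w ≠ G.dist v w := fun hh => h.ne (hinj u v hh)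
    unfold Nat.dist
    omega
  have hB : ∀ u v : V, G.dist u w = G.dist v w + 1 → G.Adj u v := by
    intro u v h
    obtain ⟨p, hp⟩ := hc.exists_walk_length_eq_dist u w
    cases p with
    | nil =>
      rw [SimpleGraph.dist_self] at h
      omega
    | @cons _ x _ had q =>
      have hxw : G.dist x w ≤ q.length := SimpleGraph.dist_le q
      have hl : q.length + 1 = G.dist u w := by simpa using hp
      have hux : G.dist u x = 1 := SimpleGraph.dist_eq_one_iff_adj.mpr had
      have t : G.dist u w ≤ G.dist u x + G.dist x w := hc.dist_triangle
      have hx : G.dist x w = G.dist v w := by omega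
      have hxv : x = v := hinj x v hx
      exact hxv ▸ had
  have hadj : ∀ u v : V, G.Adj u v ↔ Nat.dist (e u).val (e v).val = 1 := by
    intro u v
    rw [he, he]
    constructor
    · exact hA u v
    · intro h
      unfold Nat.dist at h
      rcases Nat.lt_or_ge (G.dist u w) (G.dist v w) with hlt' | hge
      · exact (hB v u (by omega)).symm
      · exact hB u v (by omega)
  constructor
  · refine ⟨⟨e, fun {u v} => ?_⟩⟩
    rw [pathGraph_adj, hadj u v]
    unfold Nat.dist
    omega
  · have hww : G.dist w w = 0 := SimpleGraph.dist_self
    have h1lt : 1 < Fintype.card V := hcard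
    set x := e.symm ⟨1, h1lt⟩ with hxd
    have hex : G.dist x w = 1 := by
      have := congrArg Fin.val (e.apply_symm_apply ⟨1, h1lt⟩)
      rw [he] at this
      simpa [hxd] using this
    have hax : G.Adj w x := (hadj w x).mpr (by rw [he, he, hww, hex]; unfold Nat.dist; omega)
    refine ⟨x, hax, fun y hy => ?_⟩
    have h1 : Nat.dist (G.dist w w) (G.dist y w) = 1 := by
      have := (hadj w y).mp hy
      rwa [he, he] at this
    rw [hww] at h1
    unfold Nat.dist at h1
    apply hinj
    omega

end Aux

theorem stmt0 [Fintype V] (𝒢 : Set (SimpleGraph V)) (hne : 𝒢.Nonempty)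
    (hconn : ∀ G ∈ 𝒢, G.Connected) :
    SdS 𝒢 = 1 ↔
      ∃ w : V, ∀ G ∈ 𝒢, Nonempty (G ≃g pathGraph (Fintype.card V)) ∧ IsLeaf G w := by
  classical
  set T : Set ℕ := {n | ∃ S : Set V, S.ncard = n ∧ ∀ G ∈ 𝒢, IsStrongMetricGen G S} with hT
  have hSdS : SdS 𝒢 = sInf T := rfl
  constructor
  · intro h1
    by_cases hcard : 2 ≤ Fintype.card V
    · have hTne : T.Nonempty := by
        by_contra hE
        rw [Set.not_nonempty_iff_eq_empty] at hE
        rw [hSdS, hE, Nat.sInf_empty] at h1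
        omega
      have h1mem : 1 ∈ T := by
        have := Nat.sInf_mem hTne
        rwa [← hSdS, h1] at this
      obtain ⟨S, hS1, hSgen⟩ := h1mem
      obtain ⟨w, rfl⟩ := Set.ncard_eq_one.mp hS1
      refine ⟨w, fun G hG => ?_⟩
      have hgen : ∀ u v : V, u ≠ v → StronglyResolves G w u v := by
        intro u v huv
        obtain ⟨y, hy, hres⟩ := hSgen G hG u v huv
        rw [Set.mem_singleton_iff] at hy
        exact hy ▸ hres
      exact forward_core (hconn G hG) hcard hgen
    · exfalso
      have hall : ∀ u v : V, u = v := by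
        exact Fintype.card_le_one_iff.mp (show Fintype.card V ≤ 1 by omega)
      have h0 : 0 ∈ T := by
        refine ⟨∅, by simp, fun G _ u v huv => absurd (hall u v) huv⟩
      have := Nat.sInf_le h0
      rw [← hSdS, h1] at this
      omega
  · rintro ⟨w, hw⟩
    obtain ⟨G₀, hG₀⟩ := hne
    obtain ⟨-, x, hx, -⟩ := hw G₀ hG₀
    have hxw : x ≠ w := hx.ne'
    have h1mem : 1 ∈ T := by
      refine ⟨{w}, Set.ncard_singleton w, fun G hG => ?_⟩
      obtain ⟨⟨φ⟩, hleaf⟩ := hw G hG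
      let e : V ≃ Fin (Fintype.card V) := φ.toEquiv
      have hcoe : ∀ z : V, e z = φ z := fun z => rfl
      have hadj : ∀ u v : V, G.Adj u v ↔
          Nat.dist (e u).val (e v).val = 1 := by
        intro u v
        rw [hcoe u, hcoe v]
        have h := φ.map_rel_iff (a := u) (b := v)
        rw [pathGraph_adj] at h
        rw [← h]
        unfold Nat.dist
        omega
      have hpos := leaf_pos e hadj hleaf
      intro u v huv
      exact ⟨w, Set.mem_singleton w,
        gen_of_endpoint (hconn G hG) e hadj hpos u v huv⟩
    have h0not : 0 ∉ T := by
      rintro ⟨S, hS0, hSgen⟩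
      rw [Set.ncard_eq_zero S.toFinite] at hS0
      subst hS0
      obtain ⟨y, hy, -⟩ := hSgen G₀ hG₀ x w hxw
      exact (Set.notMem_empty y) hy
    have hle := Nat.sInf_le h1mem
    have hmem := Nat.sInf_mem ⟨1, h1mem⟩
    have hne0 : sInf T ≠ 0 := fun h => h0not (h ▸ hmem)
    rw [hSdS]
    omega
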